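/- For every even integer n ≥ 4 and every x ∈ [0,π], the sine polynomial (n + 1/2)·sin(x) + Σ_{k=2}^{n} sin(kx) is nonnegative. -/

import Mathlib

open Real Finset

theorem sum_sin_id (x : ℝ) (n : ℕ) :
    2 * Real.sin (x/2) * ∑ k ∈ Finset.Icc 1 n, Real.sin (k * x)
      = Real.cos (x/2) - Real.cos ((n + 1/2) * x) := by
  induction n with
  | zero => simp; ring_nf
  | succ n ih =>
    rw [Finset.sum_Icc_succ_top (by omega)]
    have h : Real.cos ((n + 1/2) * x) - Real.cos ((n + 1 + 1/2) * x)
        = 2 * Real.sin (x/2) * Real.sin ((n+1) * x) := by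
      rw [Real.cos_sub_cos,
        show (((n:ℝ) + 1/2) * x - ((n:ℝ) + 1 + 1/2) * x)/2 = -(x/2) by ring,
        show (((n:ℝ) + 1/2) * x + ((n:ℝ) + 1 + 1/2) * x)/2 = ((n:ℝ)+1)*x by ring,
        Real.sin_neg]
      ring
    rw [mul_add, ih]
    push_cast
    linarith [h]

theorem abs_sin_mul (m : ℕ) (t : ℝ) : |Real.sin (m * t)| ≤ m * |Real.sin t| := by
  induction m with
  | zero => simp
  | succ m ih =>
    have : Real.sin ((m+1) * t) = Real.sin (m*t) * Real.cos t + Real.cos (m*t) * Real.sin t := by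
      rw [show ((m:ℝ)+1)*t = m*t + t by ring, Real.sin_add]
    push_cast
    rw [this]
    calc |Real.sin (m*t) * Real.cos t + Real.cos (m*t) * Real.sin t|
        ≤ |Real.sin (m*t) * Real.cos t| + |Real.cos (m*t) * Real.sin t| := abs_add_le _ _
      _ ≤ m * |Real.sin t| + |Real.sin t| := by
          rw [abs_mul, abs_mul]
          have c1 : |Real.cos t| ≤ 1 := Real.abs_cos_le_one t
          have c2 : |Real.cos ((m:ℝ)*t)| ≤ 1 := Real.abs_cos_le_one _
          nlinarith [abs_nonneg (Real.sin ((m:ℝ)*t)), abs_nonneg (Real.sin t),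
            abs_nonneg (Real.cos t), abs_nonneg (Real.cos ((m:ℝ)*t))]
      _ = (m+1) * |Real.sin t| := by ring

theorem case1_ineq (n c C : ℝ) (hn : 4 ≤ n) (hc : 1/2 ≤ c) (hc1 : c ≤ 1) (hC : C ≤ 1) :
    0 ≤ (4*n-2)*(1-c^2)*c + (c - C) := by
  nlinarith [mul_nonneg (by linarith : (0:ℝ) ≤ 1 - c)
      (by nlinarith : (0:ℝ) ≤ 14*c^2 + 14*c - 1),
    mul_nonneg (mul_nonneg (by linarith : (0:ℝ) ≤ 4*n-2-14)
      (by nlinarith : (0:ℝ) ≤ 1 - c^2)) (by linarith : (0:ℝ) ≤ c)]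

theorem case2_ineq (n u C : ℝ) (hn : 4 ≤ n) (hu0 : 0 ≤ u) (hu2 : u ≤ 1/2)
    (hC : C ≤ (2*n+1)*u) :
    0 ≤ (4*n-2)*(1-u^2)*u + (u - C) := by
  nlinarith [mul_nonneg hu0 (by nlinarith [mul_nonneg (by linarith : (0:ℝ) ≤ 4*n-2) (by nlinarith : (0:ℝ) ≤ 1/4 - u^2)] : (0:ℝ) ≤ (4*n-2)*(1-u^2) - 2*n)]

theorem even_polynomial_nonneg (n : ℕ) (hn : 4 ≤ n) (heven : Even n) (x : ℝ)
    (hx : x ∈ Set.Icc 0 π) :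
    0 ≤ ((n : ℝ) + 1 / 2) * Real.sin x + ∑ k ∈ Finset.Icc 2 n, Real.sin (k * x) := by
  obtain ⟨hx0, hxπ⟩ := hx
  have hsplit : ∑ k ∈ Finset.Icc 1 n, Real.sin (k * x)
      = Real.sin (1 * x) + ∑ k ∈ Finset.Icc 2 n, Real.sin (k * x) := by
    rw [show Finset.Icc 1 n = insert 1 (Finset.Icc 2 n) from
      Finset.ext fun k => by simp [Finset.mem_Icc, Finset.mem_insert]; omega]
    rw [Finset.sum_insert (by simp)]
    norm_num
  have hrw : ((n : ℝ) + 1 / 2) * Real.sin x + ∑ k ∈ Finset.Icc 2 n, Real.sin (k * x)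
      = ((n : ℝ) - 1 / 2) * Real.sin x + ∑ k ∈ Finset.Icc 1 n, Real.sin (k * x) := by
    rw [hsplit, one_mul]; ring
  rw [hrw]
  rcases eq_or_lt_of_le hx0 with h0 | h0
  · simp [← h0]
  set s := Real.sin (x/2) with hs_def
  set c := Real.cos (x/2) with hc_def
  have hs : 0 < s := Real.sin_pos_of_pos_of_lt_pi (by linarith) (by linarith [Real.pi_pos])
  have hc0 : 0 ≤ c := Real.cos_nonneg_of_mem_Icc ⟨by linarith [Real.pi_pos], by linarith⟩
  have hpyth : s^2 + c^2 = 1 := Real.sin_sq_add_cos_sq _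
  have hsin : Real.sin x = 2 * s * c := by
    have := Real.sin_two_mul (x/2)
    rw [show 2*(x/2) = x by ring] at this
    rw [this]
  have hsum := sum_sin_id x n
  have h2 : 2*s*(((n:ℝ)-1/2) * Real.sin x + ∑ k ∈ Finset.Icc 1 n, Real.sin (k*x))
      = (4*(n:ℝ)-2)*(1-c^2)*c + (c - Real.cos (((n:ℝ) + 1/2)*x)) := by
    rw [mul_add, hsum, hsin]
    linear_combination (4*(n:ℝ)-2)*c*hpyth
  have hn4 : (4:ℝ) ≤ (n:ℝ) := by exact_mod_cast hn
  have hR : 0 ≤ (4*(n:ℝ)-2)*(1-c^2)*c + (c - Real.cos (((n:ℝ) + 1/2)*x)) := by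
    rcases le_or_gt x (2*π/3) with hcase | hcase
    · -- x ≤ 2π/3 : c ≥ 1/2
      have hc12 : 1/2 ≤ c := by
        rw [hc_def, show (1:ℝ)/2 = Real.cos (π/3) by rw [Real.cos_pi_div_three]]
        apply Real.cos_le_cos_of_nonneg_of_le_pi (by linarith) (by linarith [Real.pi_pos]) (by linarith)
      have hc1 : c ≤ 1 := Real.cos_le_one _
      have hC : Real.cos (((n:ℝ) + 1/2)*x) ≤ 1 := Real.cos_le_one _
      exact case1_ineq (n:ℝ) c _ hn4 hc12 hc1 hC
    · -- x > 2π/3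
      set y := π - x with hy_def
      have hy0 : 0 ≤ y := by simp [hy_def]; linarith
      have hy3 : y < π/3 := by simp [hy_def]; linarith
      have hcy : c = Real.sin (y/2) := by
        rw [hc_def, show x/2 = π/2 - y/2 by rw [hy_def]; ring, Real.cos_pi_div_two_sub]
      obtain ⟨m, hm⟩ := heven
      have hC : Real.cos (((n:ℝ) + 1/2)*x) = Real.sin ((2*n+1) * (y/2)) := by
        rw [show ((n:ℝ) + 1/2)*x = (π/2 - (2*(n:ℝ)+1)*(y/2)) + m*(2*π) by
              rw [hy_def]; subst hm; push_cast; ring,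
          Real.cos_add_nat_mul_two_pi, Real.cos_pi_div_two_sub]
      have hsy : 0 ≤ Real.sin (y/2) :=
        Real.sin_nonneg_of_nonneg_of_le_pi (by linarith) (by linarith [Real.pi_pos])
      have hsy2 : Real.sin (y/2) ≤ 1/2 := by
        rw [show (1:ℝ)/2 = Real.sin (π/6) by rw [Real.sin_pi_div_six]]
        apply Real.sin_le_sin_of_le_of_le_pi_div_two (by linarith [Real.pi_pos]) (by linarith [Real.pi_pos]) (by linarith)
      have hbound : Real.sin ((2*(n:ℝ)+1) * (y/2)) ≤ (2*(n:ℝ)+1) * Real.sin (y/2) := by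
        have h := abs_sin_mul (2*n+1) (y/2)
        rw [abs_of_nonneg hsy] at h
        push_cast at h
        exact le_trans (le_abs_self _) h
      rw [hC, hcy]
      exact case2_ineq (n:ℝ) _ _ hn4 hsy hsy2 hbound
  nlinarith [h2, hR, hs]
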